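/- Let A be a Novikov algebra over a commutative ring K, let R : A → A be a derivation (R(a∘b) = R(a)∘b + a∘R(b)) satisfying a∘R(b) = b∘R(a) for all a,b ∈ A, and let π : A → K be a K-linear functional with π(R(a)) = 0 for all a ∈ A. Define ϑ : A × A → K by ϑ(a,b) = π(a∘R(b)). Then ϑ is symmetric (ϑ(a,b) = ϑ(b,a)) and is a right-symmetric 2-cocycle with trivial coefficients: ϑ(a∘b, c) − ϑ(a∘c, b) − ϑ(a, [b,c]) = 0 for all a,b,c ∈ A, where [b,c] = b∘c − c∘b. -/
import Mathlib


/-- Let `A` be a Novikov algebra, `R` a derivation with `a∘R(b) = b∘R(a)`, and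
`π` a linear functional vanishing on the image of `R`.  Then
`ϑ(a,b) = π(a∘R(b))` is symmetric and is a right-symmetric 2-cocycle with
trivial coefficients: `ϑ(a∘b,c) − ϑ(a∘c,b) − ϑ(a,[b,c]) = 0`. -/
theorem novikov_central_extension_cocycle
    {K A : Type*} [CommRing K] [AddCommGroup A] [Module K A]
    (mul : A →ₗ[K] A →ₗ[K] A)
    (hrs : ∀ a b c : A,
      mul (mul a b) c - mul a (mul b c) = mul (mul a c) b - mul a (mul c b))
    (hnov : ∀ a b c : A, mul a (mul b c) = mul b (mul a c))
    (R : A →ₗ[K] A)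
    (hder : ∀ a b : A, R (mul a b) = mul (R a) b + mul a (R b))
    (hsym : ∀ a b : A, mul a (R b) = mul b (R a))
    (π : A →ₗ[K] K)
    (hπ : ∀ a : A, π (R a) = 0) :
    (∀ a b : A, π (mul a (R b)) = π (mul b (R a))) ∧
    (∀ a b c : A,
      π (mul (mul a b) (R c)) - π (mul (mul a c) (R b))
        - π (mul a (R (mul b c - mul c b))) = 0) := by
  have hπmul : ∀ x y : A, π (mul (R x) y) = - π (mul x (R y)) := by
    intro x y
    have h := congrArg π (hder x y)
    rw [hπ, map_add] at h
    exact eq_neg_of_add_eq_zero_left h.symm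
  refine ⟨fun a b => by rw [hsym], fun a b c => ?_⟩
  have E1 := congrArg π (hrs a b (R c))
  have E2 := congrArg π (hrs a c (R b))
  have E3 := congrArg (fun x => π (mul x c)) (hsym a b)
  have E4 := congrArg (fun x => π (mul x b)) (hsym a c)
  have E5 := congrArg π (hrs b (R a) c)
  have E6 := congrArg π (hrs c (R a) b)
  have E7 := congrArg π (hnov b c (R a))
  have E8 := congrArg π (hnov c (R a) b)
  have E9 := congrArg π (hnov b (R a) c)
  have E10 := hπmul a (mul c b)
  have E11 := hπmul a (mul b c)
  have E12 := hsym (mul b c) a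
  have E13 := hsym (mul c b) a
  simp only [map_sub, map_add] at E1 E2 E3 E4 E5 E6 E7 E8 E9 ⊢
  rw [hder b c, hder c b, map_add, map_add, map_add, map_add]
  linear_combination E1 - E2 + E4 - E3 + E6 - E5 + E7 + E8 - E9 + E10 - E11
    + congrArg π E13 - congrArg π E12
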